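/- Let J be a poset ideal in Hom(P,[n]). A subset F ⊆ P×[n] whose projection onto P is surjective is a face of the staircase complex 𝔅(J) associated with J if and only if Γφ ⊆ F ⊆ T_*(φ) for some φ ∈ J, and such φ is unique. In particular, for φ ∈ J and ψ ∈ Hom(P,[n]) \ J one has Γψ ⊄ T_*(φ). -/
import Mathlib


variable {P : Type*} [PartialOrder P] [Fintype P]

/-- `T_*(φ) = {(p,i) | φ q ≤ i ≤ φ p for all q < p}`. -/
def Tstar {n : ℕ} (φ : P → Fin n) : Set (P × Fin n) :=
  {x | x.2 ≤ φ x.1 ∧ ∀ q : P, q < x.1 → φ q ≤ x.2}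

/-- The graph `Γφ = {(p, φ p) | p ∈ P}` of a map φ : P → [n]. -/
def graphOf {n : ℕ} (φ : P → Fin n) : Set (P × Fin n) :=
  {x | x.2 = φ x.1}

/-- A staircase face is a subset of P × [n] containing no pair (p,i), (q,j) with
p < q in P and i > j in [n]. -/
def IsStaircaseFace {n : ℕ} (F : Set (P × Fin n)) : Prop :=
  ∀ x ∈ F, ∀ y ∈ F, x.1 < y.1 → ¬ y.2 < x.2

/-- A face of the staircase complex 𝔅(J) associated with a poset ideal J ⊆ Hom(P,[n]) is a
staircase face F such that Γψ ⊄ F for every isotone ψ ∉ J. -/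
def IsFaceBJ {n : ℕ} (J : Set (P → Fin n)) (F : Set (P × Fin n)) : Prop :=
  IsStaircaseFace F ∧ ∀ ψ : P → Fin n, Monotone ψ → ψ ∉ J → ¬ graphOf ψ ⊆ F

/-- Let J be a poset ideal in Hom(P,[n]).  A subset F of P × [n] with surjective projection
onto P is a face of 𝔅(J) iff Γφ ⊆ F ⊆ T_*(φ) for some φ ∈ J; such a φ is unique.  In
particular, for φ ∈ J and isotone ψ ∉ J one has Γψ ⊄ T_*(φ). -/
theorem stmt7 {n : ℕ} (J : Set (P → Fin n))
    (hJ1 : ∀ φ ∈ J, Monotone φ)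
    (hJ2 : ∀ φ ∈ J, ∀ ψ : P → Fin n, Monotone ψ → ψ ≤ φ → ψ ∈ J)
    (F : Set (P × Fin n)) (hsurj : ∀ p : P, ∃ i, (p, i) ∈ F) :
    (IsFaceBJ J F ↔ ∃ φ ∈ J, graphOf φ ⊆ F ∧ F ⊆ Tstar φ) ∧
      (∀ φ φ' : P → Fin n, φ ∈ J → φ' ∈ J →
        graphOf φ ⊆ F → F ⊆ Tstar φ → graphOf φ' ⊆ F → F ⊆ Tstar φ' → φ = φ') ∧
      (∀ φ ∈ J, ∀ ψ : P → Fin n, Monotone ψ → ψ ∉ J → ¬ graphOf ψ ⊆ Tstar φ) := by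
  have h3 : ∀ φ ∈ J, ∀ ψ : P → Fin n, Monotone ψ → ψ ∉ J → ¬ graphOf ψ ⊆ Tstar φ := by
    intro φ hφ ψ hψm hψ hsub
    exact hψ (hJ2 φ hφ ψ hψm fun p =>
      (hsub (show ((p, ψ p) : P × Fin n) ∈ graphOf ψ from rfl)).1)
  have huniq : ∀ φ φ' : P → Fin n, φ ∈ J → φ' ∈ J →
      graphOf φ ⊆ F → F ⊆ Tstar φ → graphOf φ' ⊆ F → F ⊆ Tstar φ' → φ = φ' := by
    intro φ φ' _ _ hg hT hg' hT'
    funext p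
    have h1 : φ p ≤ φ' p := (hT' (hg (show ((p, φ p) : P × Fin n) ∈ graphOf φ from rfl))).1
    have h2 : φ' p ≤ φ p := (hT (hg' (show ((p, φ' p) : P × Fin n) ∈ graphOf φ' from rfl))).1
    exact le_antisymm h1 h2
  refine ⟨⟨?_, ?_⟩, huniq, h3⟩
  · rintro ⟨hst, hface⟩
    have key : ∀ p : P, ∃ i : Fin n, (p, i) ∈ F ∧ ∀ j : Fin n, (p, j) ∈ F → j ≤ i := by
      intro p
      obtain ⟨i, hi, hmax⟩ :=
        Set.exists_max_image {i : Fin n | (p, i) ∈ F} id (Set.toFinite _) (hsurj p)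
      exact ⟨i, hi, fun j hj => hmax j hj⟩
    choose φ hφF hφmax using key
    have hmono : Monotone φ := by
      intro p q hpq
      rcases eq_or_lt_of_le hpq with rfl | hlt
      · exact le_rfl
      · by_contra hcon
        exact hst (p, φ p) (hφF p) (q, φ q) (hφF q) hlt (not_le.mp hcon)
    have hgsub : graphOf φ ⊆ F := by
      rintro ⟨p, i⟩ hi
      have : i = φ p := hi
      subst this
      exact hφF p
    have hφJ : φ ∈ J := by
      by_contra hc
      exact hface φ hmono hc hgsub
    refine ⟨φ, hφJ, hgsub, ?_⟩
    rintro ⟨p, i⟩ hi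
    refine ⟨hφmax p i hi, fun q hq => ?_⟩
    by_contra hcon
    exact hst (q, φ q) (hφF q) (p, i) hi hq (not_le.mp hcon)
  · rintro ⟨φ, hφJ, hg, hT⟩
    refine ⟨?_, ?_⟩
    · intro x hx y hy hlt hcon
      have h1 : φ x.1 ≤ y.2 := (hT hy).2 x.1 hlt
      have h2 : x.2 ≤ φ x.1 := (hT hx).1
      exact absurd (h2.trans h1) (not_le.mpr hcon)
    · intro ψ hm hψ hsub
      exact h3 φ hφJ ψ hm hψ (hsub.trans hT)
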